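/- For C ≥ 2, ρ₁ < C, and 0 < ρ₂ < C, the function Φ(z) = (1/z)·(ρ₁+ρ₂z)^C/C! − Σ_{m=0}^{C−1} (ρ₁+ρ₂z)^m/m! has exactly one root z > 0. -/

import Mathlib

set_option maxHeartbeats 1000000

open Real Set Finset Filter Topology Nat

private lemma fact_key {k m j : ℕ} (h : m + j ≤ k) :
    (k - j)! * (m + j)! ≤ k ! * m ! := by
  have hj : j ≤ k := le_trans (Nat.le_add_left _ _) h
  have h1 : m ! * (m + j).descFactorial j = (m + j)! := by
    simpa using Nat.factorial_mul_descFactorial (n := m + j) (k := j) (Nat.le_add_left _ _)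
  have h2 : (k - j)! * k.descFactorial j = k ! :=
    Nat.factorial_mul_descFactorial hj
  have h3 : (m + j).descFactorial j ≤ k.descFactorial j := Nat.descFactorial_le _ h
  calc (k - j)! * (m + j)! = (k - j)! * (m ! * (m + j).descFactorial j) := by rw [h1]
    _ ≤ (k - j)! * (m ! * k.descFactorial j) :=
        Nat.mul_le_mul_left _ (Nat.mul_le_mul_left _ h3)
    _ = (k - j)! * k.descFactorial j * m ! := by ring
    _ = k ! * m ! := by rw [h2]

private lemma claimA (u : ℝ) (hu : 0 ≤ u) {k m j : ℕ} (h : m + j ≤ k) :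
    u ^ k / k ! * (u ^ m / m !) ≤ u ^ (k - j) / (k - j)! * (u ^ (m + j) / (m + j)!) := by
  have e1 : u ^ k / k ! * (u ^ m / m !) = u ^ (k + m) / ((k ! : ℝ) * m !) := by
    rw [pow_add]; ring
  have e2 : u ^ (k - j) / (k - j)! * (u ^ (m + j) / (m + j)!)
      = u ^ (k + m) / (((k - j)! : ℝ) * (m + j)!) := by
    rw [show k + m = (k - j) + (m + j) by omega, pow_add]; ring
  rw [e1, e2]
  have hd : (((k - j)! : ℝ) * (m + j)!) ≤ (k ! : ℝ) * m ! := by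
    exact_mod_cast fact_key h
  have hpos : (0:ℝ) < ((k - j)! : ℝ) * (m + j)! := by positivity
  have hnum : (0:ℝ) ≤ u ^ (k + m) := pow_nonneg hu _
  exact div_le_div_of_nonneg_left hnum hpos hd


private lemma KI (n : ℕ) (u : ℝ) (hu : 0 < u) :
    u * (u ^ n / n !) ^ 2 ≤
      (∑ m ∈ Finset.range (n + 1), u ^ m / m !) ^ 2
        + (u - (n + 1)) * (u ^ n / n !) * ∑ m ∈ Finset.range (n + 1), u ^ m / m ! := by
  set T : ℝ := u ^ n / n ! with hT
  set S : ℝ := ∑ m ∈ Finset.range (n + 1), u ^ m / m ! with hSdef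
  have hs_nonneg : ∀ m : ℕ, (0:ℝ) ≤ u ^ m / m ! := fun m => by positivity
  have hST : S - T = ∑ m ∈ Finset.range n, u ^ m / m ! := by
    rw [hSdef, Finset.sum_range_succ]; ring
  -- identity: u * (S - T) = ∑ m * s m
  have hident : u * (S - T) = ∑ m ∈ Finset.range (n + 1), (m : ℝ) * (u ^ m / m !) := by
    rw [hST, Finset.mul_sum, Finset.sum_range_succ']
    simp only [Nat.cast_zero, zero_mul, add_zero]
    refine Finset.sum_congr rfl fun i _ => ?_
    have hfs : ((i + 1)! : ℝ) = (i + 1) * i ! := by exact_mod_cast Nat.factorial_succ i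
    have hne : (i ! : ℝ) ≠ 0 := by positivity
    rw [pow_succ, hfs]
    push_cast
    field_simp
  -- triangle rewrite
  have htri : ∑ m ∈ Finset.range (n + 1), ((n:ℝ) - m) * (u ^ m / m !)
      = ∑ i ∈ Finset.range n, ∑ m ∈ Finset.range (n - i), u ^ m / m ! := by
    have h1 : ∀ m ∈ Finset.range (n + 1),
        ((n:ℝ) - m) * (u ^ m / m !) = ∑ _i ∈ Finset.range (n - m), u ^ m / m ! := by
      intro m hm
      rw [Finset.sum_const, Finset.card_range, nsmul_eq_mul]
      congr 1
      rw [Finset.mem_range] at hm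
      have : (m:ℝ) ≤ n := by exact_mod_cast Nat.lt_succ_iff.mp hm
      push_cast [Nat.cast_sub (Nat.lt_succ_iff.mp hm)]
      ring
    rw [Finset.sum_congr rfl h1]
    exact Finset.sum_comm' (by intro x y; simp only [Finset.mem_range]; omega)
  -- claim B
  have hB : ∀ i ∈ Finset.range n,
      T * ∑ m ∈ Finset.range (n - i), u ^ m / m ! ≤ u ^ (n - 1 - i) / (n - 1 - i)! * S := by
    intro i hi
    rw [Finset.mem_range] at hi
    have hsub : n - (i + 1) = n - 1 - i := by omega
    have step1 : ∀ m ∈ Finset.range (n - i),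
        T * (u ^ m / m !) ≤ u ^ (n - 1 - i) / (n - 1 - i)! * (u ^ (m + (i + 1)) / (m + (i + 1))!) := by
      intro m hm
      rw [Finset.mem_range] at hm
      have := claimA u hu.le (k := n) (m := m) (j := i + 1) (by omega)
      rwa [hsub] at this
    have step2 : ∑ m ∈ Finset.range (n - i), u ^ (m + (i + 1)) / (m + (i + 1))! ≤ S := by
      have e : ∑ m ∈ Finset.range (n - i), u ^ (m + (i + 1)) / (m + (i + 1))!
          = ∑ m ∈ Finset.Ico (i + 1) (n + 1), u ^ m / m ! := by
        rw [Finset.sum_Ico_eq_sum_range]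
        refine Finset.sum_congr (by congr 1; omega) fun m _ => by
          rw [show i + 1 + m = m + (i + 1) from by omega]
      rw [e, hSdef]
      apply Finset.sum_le_sum_of_subset_of_nonneg
      · intro x hx
        simp only [Finset.mem_Ico, Finset.mem_range] at *
        omega
      · intro x _ _; exact hs_nonneg x
    calc T * ∑ m ∈ Finset.range (n - i), u ^ m / m !
        = ∑ m ∈ Finset.range (n - i), T * (u ^ m / m !) := Finset.mul_sum _ _ _
      _ ≤ ∑ m ∈ Finset.range (n - i),
            u ^ (n - 1 - i) / (n - 1 - i)! * (u ^ (m + (i + 1)) / (m + (i + 1))!) :=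
          Finset.sum_le_sum step1
      _ = u ^ (n - 1 - i) / (n - 1 - i)! *
            ∑ m ∈ Finset.range (n - i), u ^ (m + (i + 1)) / (m + (i + 1))! :=
          (Finset.mul_sum _ _ _).symm
      _ ≤ u ^ (n - 1 - i) / (n - 1 - i)! * S :=
          mul_le_mul_of_nonneg_left step2 (hs_nonneg _)
  have hmain : T * ∑ m ∈ Finset.range (n + 1), ((n:ℝ) - m) * (u ^ m / m !) ≤ S * (S - T) := by
    rw [htri, Finset.mul_sum]
    calc ∑ i ∈ Finset.range n, T * ∑ m ∈ Finset.range (n - i), u ^ m / m !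
        ≤ ∑ i ∈ Finset.range n, u ^ (n - 1 - i) / (n - 1 - i)! * S := Finset.sum_le_sum hB
      _ = (∑ i ∈ Finset.range n, u ^ (n - 1 - i) / (n - 1 - i)!) * S := by
          rw [Finset.sum_mul]
      _ = (∑ j ∈ Finset.range n, u ^ j / j !) * S := by
          rw [Finset.sum_range_reflect (fun j => u ^ j / j !) n]
      _ = S * (S - T) := by rw [← hST]; ring
  have hexp : ∑ m ∈ Finset.range (n + 1), ((n:ℝ) - m) * (u ^ m / m !)
      = n * S - u * (S - T) := by
    rw [hident, hSdef, Finset.mul_sum, ← Finset.sum_sub_distrib]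
    exact Finset.sum_congr rfl fun m _ => by ring
  rw [hexp] at hmain
  nlinarith [hmain]


private noncomputable def Gfun (ρ₁ ρ₂ : ℝ) (n : ℕ) : ℝ → ℝ := fun z =>
  (ρ₁ + ρ₂ * z) ^ (n + 1) / (n + 1)! - z * ∑ m ∈ Finset.range (n + 1), (ρ₁ + ρ₂ * z) ^ m / m !

private lemma Gcont (ρ₁ ρ₂ : ℝ) (n : ℕ) : Continuous (Gfun ρ₁ ρ₂ n) := by
  have hcu : Continuous fun z : ℝ => ρ₁ + ρ₂ * z := by continuity
  exact ((hcu.pow _).div_const _).sub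
    (continuous_id.mul (continuous_finset_sum _ fun m _ => (hcu.pow m).div_const _))

private lemma Gkey (ρ₁ ρ₂ : ℝ) (n : ℕ) (hρ₁ : 0 < ρ₁) (hρ₂ : 0 < ρ₂)
    (hρ₂C : ρ₂ < (n : ℝ) + 1) :
    ∀ z : ℝ, 0 < z → Gfun ρ₁ ρ₂ n z = 0 →
      ∃ d, HasDerivAt (Gfun ρ₁ ρ₂ n) d z ∧ d < 0 := by
  intro z hz hGz
  have hu' : ∀ x : ℝ, HasDerivAt (fun z : ℝ => ρ₁ + ρ₂ * z) ρ₂ x := by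
    intro x; simpa using ((hasDerivAt_id x).const_mul ρ₂).const_add ρ₁
  have hterm : ∀ (m : ℕ) (x : ℝ),
      HasDerivAt (fun z : ℝ => (ρ₁ + ρ₂ * z) ^ m / m !)
        ((m * (ρ₁ + ρ₂ * x) ^ (m - 1) * ρ₂) / m !) x :=
    fun m x => ((hu' x).pow m).div_const _
  have hS' : HasDerivAt (fun z => ∑ m ∈ Finset.range (n + 1), (ρ₁ + ρ₂ * z) ^ m / m !)
      (∑ m ∈ Finset.range (n + 1), (m * (ρ₁ + ρ₂ * z) ^ (m - 1) * ρ₂) / m !) z :=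
    HasDerivAt.fun_sum fun m _ => hterm m z
  set v : ℝ := ρ₁ + ρ₂ * z with hv
  have hvpos : 0 < v := by positivity
  set T : ℝ := v ^ n / n ! with hTdef
  set S : ℝ := ∑ m ∈ Finset.range (n + 1), v ^ m / m ! with hSdef
  have hTpos : 0 < T := by rw [hTdef]; positivity
  have hSpos : 0 < S := by
    rw [hSdef]
    exact Finset.sum_pos (fun m _ => by positivity) ⟨0, Finset.mem_range.mpr (Nat.succ_pos n)⟩
  -- the sum in the derivative simplifies
  have hsum_id : ∑ m ∈ Finset.range (n + 1), ((m : ℝ) * v ^ (m - 1) * ρ₂) / m !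
      = ρ₂ * (S - T) := by
    have hST : S - T = ∑ m ∈ Finset.range n, v ^ m / m ! := by
      rw [hSdef, hTdef, Finset.sum_range_succ]; ring
    rw [hST, Finset.sum_range_succ', Finset.mul_sum]
    simp only [Nat.cast_zero, zero_mul, zero_div, add_zero]
    refine Finset.sum_congr rfl fun i _ => ?_
    have hfs : ((i + 1)! : ℝ) = (i + 1) * i ! := by exact_mod_cast Nat.factorial_succ i
    have hne : (i ! : ℝ) ≠ 0 := by positivity
    have hne2 : ((i:ℝ) + 1) ≠ 0 := by positivity
    rw [hfs]
    push_cast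
    field_simp
  have hd : HasDerivAt (Gfun ρ₁ ρ₂ n) (ρ₂ * T - (S + z * (ρ₂ * (S - T)))) z := by
    have h0 := (hterm (n + 1) z).sub ((hasDerivAt_id z).mul hS')
    have hfe : ((n + 1)! : ℝ) = ((n : ℝ) + 1) * n ! := by exact_mod_cast Nat.factorial_succ n
    convert h0 using 1
    case e'_4 => rfl
    case e'_5 => rfl
    case e'_8 => rfl
    simp only [id, ← hv, ← hSdef]
    rw [hsum_id]
    have hne : (n ! : ℝ) ≠ 0 := by positivity
    rw [Nat.add_sub_cancel, hfe, hTdef]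
    push_cast
    field_simp
  refine ⟨_, hd, ?_⟩
  -- root equation
  have hroot : v ^ (n + 1) / ((n + 1)! : ℝ) = z * S := by
    have : Gfun ρ₁ ρ₂ n z = v ^ (n + 1) / ((n + 1)! : ℝ) - z * S := rfl
    rw [this] at hGz; linarith
  have hfe : ((n + 1)! : ℝ) = ((n : ℝ) + 1) * n ! := by exact_mod_cast Nat.factorial_succ n
  have hvT : v * T = ((n : ℝ) + 1) * (z * S) := by
    have hne : (n ! : ℝ) ≠ 0 := by positivity
    have hn1 : ((n : ℝ) + 1) ≠ 0 := by positivity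
    rw [← hroot, hfe, hTdef]
    field_simp
    ring
  have h1 : ρ₂ * (v * T) = ((n : ℝ) + 1) * (S * (ρ₂ * z)) := by rw [hvT]; ring
  have hn1 : (1 : ℝ) ≤ (n : ℝ) + 1 := by
    have : (0:ℝ) ≤ (n:ℝ) := Nat.cast_nonneg n
    linarith
  have hX : S * (ρ₂ * z) < v * T := by
    nlinarith [h1, mul_pos (sub_pos.mpr hρ₂C) (mul_pos hvpos hTpos), mul_pos hvpos hTpos]
  have hKI := KI n v hvpos
  rw [← hTdef, ← hSdef] at hKI
  clear_value T S
  -- main inequality: (ρ₂ z) * X < v * S  where X = (n+1) S + v T - v S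
  have hwX : (ρ₂ * z) * (((n : ℝ) + 1) * S + v * T - v * S) < v * S := by
    set X : ℝ := ((n : ℝ) + 1) * S + v * T - v * S with hXdef
    rcases le_or_gt X 0 with hXs | hXpos
    · have : (ρ₂ * z) * X ≤ 0 := mul_nonpos_of_nonneg_of_nonpos (by positivity) hXs
      nlinarith [mul_pos hvpos hSpos]
    · have hTX : T * X ≤ S * S := by rw [hXdef]; nlinarith [hKI]
      clear_value X
      have h2 : (S * (ρ₂ * z)) * X < (v * T) * X := mul_lt_mul_of_pos_right hX hXpos
      have h3 : v * (T * X) ≤ v * (S * S) := mul_le_mul_of_nonneg_left hTX hvpos.le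
      have h4 : S * ((ρ₂ * z) * X) < S * (v * S) := by nlinarith [h2, h3]
      exact lt_of_mul_lt_mul_left h4 hSpos.le
  have hE : v * (ρ₂ * T - (S + z * (ρ₂ * (S - T))))
      = (ρ₂ * z) * (((n : ℝ) + 1) * S + v * T - v * S) - v * S
        + (ρ₂ * (v * T) - ((n : ℝ) + 1) * (S * (ρ₂ * z))) := by ring
  have hfinal : v * (ρ₂ * T - (S + z * (ρ₂ * (S - T)))) < v * 0 := by
    rw [mul_zero, hE, h1]
    linarith [hwX]
  exact lt_of_mul_lt_mul_left hfinal hvpos.le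


private lemma left_pos {g : ℝ → ℝ} {z d : ℝ} (hd : HasDerivAt g d z) (hneg : d < 0)
    (hz : g z = 0) : ∀ᶠ x in 𝓝[<] z, 0 < g x := by
  have h := hasDerivAt_iff_tendsto_slope.mp hd
  have h2 : ∀ᶠ x in 𝓝[≠] z, slope g z x < 0 := h.eventually_lt_const hneg
  have h3 : 𝓝[<] z ≤ 𝓝[≠] z := nhdsWithin_mono _ fun x hx => ne_of_lt hx
  filter_upwards [h2.filter_mono h3, self_mem_nhdsWithin] with x hx hxz
  have hxne : x - z < 0 := sub_neg.mpr hxz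
  have hslope : g x / (x - z) < 0 := by
    simpa [slope_def_field, hz] using hx
  rcases div_neg_iff.mp hslope with ⟨h5, _⟩ | ⟨_, h6⟩
  · exact h5
  · linarith
private lemma right_neg {g : ℝ → ℝ} {z d : ℝ} (hd : HasDerivAt g d z) (hneg : d < 0)
    (hz : g z = 0) : ∀ᶠ x in 𝓝[>] z, g x < 0 := by
  have h := hasDerivAt_iff_tendsto_slope.mp hd
  have h2 : ∀ᶠ x in 𝓝[≠] z, slope g z x < 0 := h.eventually_lt_const hneg
  have h3 : 𝓝[>] z ≤ 𝓝[≠] z := nhdsWithin_mono _ fun x hx => (_root_.ne_of_lt hx).symm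
  filter_upwards [h2.filter_mono h3, self_mem_nhdsWithin] with x hx hxz
  have hxne : 0 < x - z := sub_pos.mpr hxz
  have hslope : g x / (x - z) < 0 := by
    simpa [slope_def_field, hz] using hx
  rcases div_neg_iff.mp hslope with ⟨_, h5⟩ | ⟨h6, _⟩
  · linarith
  · exact h6

private lemma unique_root {g : ℝ → ℝ} (hg : Continuous g)
    (hkey : ∀ z, 0 < z → g z = 0 → ∃ d, HasDerivAt g d z ∧ d < 0) :
    ∀ a b : ℝ, 0 < a → g a = 0 → 0 < b → g b = 0 → a = b := by
  have main : ∀ a b : ℝ, 0 < a → g a = 0 → 0 < b → g b = 0 → ¬ a < b := by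
    intro a b ha hga hb hgb hab
    obtain ⟨d, hd, hdneg⟩ := hkey a ha hga
    have hr := right_neg hd hdneg hga
    have hmem : Ioo a b ∈ 𝓝[>] a := Ioo_mem_nhdsGT_of_mem ⟨le_refl a, hab⟩
    obtain ⟨t, hgt, ht⟩ :=
      (hr.and (Filter.eventually_of_mem hmem fun x hx => hx)).exists
    set K : Set ℝ := Icc t b ∩ g ⁻¹' {0} with hK
    have hKc : IsClosed K := isClosed_Icc.inter (isClosed_singleton.preimage hg)
    have hbK : b ∈ K := ⟨⟨ht.2.le, le_refl b⟩, hgb⟩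
    have hbdd : BddBelow K := ⟨t, fun x hx => hx.1.1⟩
    set s := sInf K with hs
    have hsK : s ∈ K := hKc.csInf_mem ⟨b, hbK⟩ hbdd
    have hgs : g s = 0 := hsK.2
    have hts : t < s := by
      rcases lt_or_eq_of_le hsK.1.1 with h | h
      · exact h
      · exfalso; rw [← h] at hgs; linarith
    have hspos : 0 < s := lt_trans (lt_trans ha ht.1) hts
    obtain ⟨d', hd', hdneg'⟩ := hkey s hspos hgs
    have hl := left_pos hd' hdneg' hgs
    have hmem2 : Ioo t s ∈ 𝓝[<] s := Ioo_mem_nhdsLT_of_mem ⟨hts, le_refl s⟩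
    obtain ⟨r, hgr, hr2⟩ :=
      (hl.and (Filter.eventually_of_mem hmem2 fun x hx => hx)).exists
    obtain ⟨x, hx, hgx⟩ :=
      intermediate_value_Icc (le_of_lt hr2.1) hg.continuousOn
        (show (0:ℝ) ∈ Icc (g t) (g r) from ⟨hgt.le, hgr.le⟩)
    have hxK : x ∈ K := ⟨⟨hx.1, le_trans hx.2 (le_trans hr2.2.le hsK.1.2)⟩, hgx⟩
    have hcontr : s ≤ x := csInf_le hbdd hxK
    exact absurd hcontr (not_le.mpr (lt_of_le_of_lt hx.2 hr2.2))
  intro a b ha hga hb hgb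
  rcases lt_trichotomy a b with h | h | h
  · exact absurd h (main a b ha hga hb hgb)
  · exact h
  · exact absurd h (main b a hb hgb ha hga)


private lemma Gexist (ρ₁ ρ₂ : ℝ) (n : ℕ) (hρ₁ : 0 < ρ₁) (hρ₂ : 0 < ρ₂)
    (hρ₂C : ρ₂ < (n : ℝ) + 1) : ∃ z : ℝ, 0 < z ∧ Gfun ρ₁ ρ₂ n z = 0 := by
  have hgap : (0:ℝ) < (n : ℝ) + 1 - ρ₂ := by linarith
  set z₀ : ℝ := ρ₁ / ((n : ℝ) + 1 - ρ₂) + 1 with hz₀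
  have hz₀pos : 0 < z₀ := by positivity
  have hG0 : 0 < Gfun ρ₁ ρ₂ n 0 := by
    simp only [Gfun, mul_zero, add_zero, zero_mul, sub_zero]
    positivity
  set v₀ : ℝ := ρ₁ + ρ₂ * z₀ with hv₀
  have hv₀pos : 0 < v₀ := by positivity
  have hkey : v₀ < ((n : ℝ) + 1) * z₀ := by
    have h1 : ((n : ℝ) + 1 - ρ₂) * z₀ = ρ₁ + ((n : ℝ) + 1 - ρ₂) := by
      rw [hz₀, mul_add, mul_one, mul_div_cancel₀ _ (ne_of_gt hgap)]
    nlinarith [h1]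
  have hSge : v₀ ^ n / (n ! : ℝ) ≤ ∑ m ∈ Finset.range (n + 1), v₀ ^ m / m ! := by
    exact Finset.single_le_sum (f := fun m => v₀ ^ m / (m ! : ℝ))
      (fun i _ => by positivity) (Finset.mem_range.mpr (Nat.lt_succ_self n))
  have h1 : v₀ ^ (n + 1) / ((n + 1)! : ℝ) < z₀ * (v₀ ^ n / n !) := by
    have hfe : ((n + 1)! : ℝ) = ((n : ℝ) + 1) * n ! := by exact_mod_cast Nat.factorial_succ n
    have hne : (n ! : ℝ) ≠ 0 := by positivity
    have hn1 : (0:ℝ) < (n : ℝ) + 1 := by positivity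
    have e1 : v₀ ^ (n + 1) / ((n + 1)! : ℝ) = v₀ * (v₀ ^ n / n !) / ((n : ℝ) + 1) := by
      rw [pow_succ, hfe]; field_simp
    rw [e1, div_lt_iff₀ hn1]
    have hp : (0:ℝ) < v₀ ^ n / n ! := by positivity
    calc v₀ * (v₀ ^ n / n !) < (((n : ℝ) + 1) * z₀) * (v₀ ^ n / n !) :=
          mul_lt_mul_of_pos_right hkey hp
      _ = z₀ * (v₀ ^ n / n !) * ((n : ℝ) + 1) := by ring
  have hGz₀ : Gfun ρ₁ ρ₂ n z₀ < 0 := by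
    have e : Gfun ρ₁ ρ₂ n z₀
        = v₀ ^ (n + 1) / ((n + 1)! : ℝ) - z₀ * ∑ m ∈ Finset.range (n + 1), v₀ ^ m / m ! := rfl
    rw [e]
    have h2 : z₀ * (v₀ ^ n / n !) ≤ z₀ * ∑ m ∈ Finset.range (n + 1), v₀ ^ m / m ! :=
      mul_le_mul_of_nonneg_left hSge hz₀pos.le
    linarith
  obtain ⟨z, hz, hGz⟩ :=
    intermediate_value_Icc' hz₀pos.le (Gcont ρ₁ ρ₂ n).continuousOn
      (show (0:ℝ) ∈ Icc (Gfun ρ₁ ρ₂ n z₀) (Gfun ρ₁ ρ₂ n 0) from ⟨hGz₀.le, hG0.le⟩)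
  refine ⟨z, ?_, hGz⟩
  rcases lt_or_eq_of_le hz.1 with h | h
  · exact h
  · exfalso; rw [← h] at hGz; linarith


open Real Set in

theorem stmt_2 (C : ℕ) (hC : 2 ≤ C) (ρ₁ ρ₂ : ℝ) (hρ₁ : 0 < ρ₁) (hρ₁C : ρ₁ < C)
    (hρ₂ : 0 < ρ₂) (hρ₂C : ρ₂ < C)
    (Φ : ℝ → ℝ)
    (hΦ : ∀ z : ℝ, Φ z = (1 / z) * (ρ₁ + ρ₂ * z) ^ C / (Nat.factorial C : ℝ)
        - ∑ m ∈ Finset.range C, (ρ₁ + ρ₂ * z) ^ m / (Nat.factorial m : ℝ)) :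
    ∃! z : ℝ, 0 < z ∧ Φ z = 0 := by
  obtain ⟨n, rfl⟩ : ∃ n, C = n + 1 := ⟨C - 1, by omega⟩
  have hρ₂C' : ρ₂ < (n : ℝ) + 1 := by push_cast at hρ₂C; linarith
  have hGΦ : ∀ z : ℝ, z ≠ 0 → Gfun ρ₁ ρ₂ n z = z * Φ z := by
    intro z hz0
    rw [hΦ z]
    show (ρ₁ + ρ₂ * z) ^ (n + 1) / ((n + 1)! : ℝ)
        - z * ∑ m ∈ Finset.range (n + 1), (ρ₁ + ρ₂ * z) ^ m / (m ! : ℝ)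
      = z * (1 / z * (ρ₁ + ρ₂ * z) ^ (n + 1) / ((n + 1)! : ℝ)
        - ∑ m ∈ Finset.range (n + 1), (ρ₁ + ρ₂ * z) ^ m / (m ! : ℝ))
    field_simp
  obtain ⟨z, hzpos, hGz⟩ := Gexist ρ₁ ρ₂ n hρ₁ hρ₂ hρ₂C'
  have hΦz : Φ z = 0 := by
    have h := hGΦ z (ne_of_gt hzpos)
    rw [hGz] at h
    rcases mul_eq_zero.mp h.symm with h' | h'
    · exact absurd h' (ne_of_gt hzpos)
    · exact h'
  refine ⟨z, ⟨hzpos, hΦz⟩, ?_⟩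
  rintro y ⟨hy, hΦy⟩
  have hGy : Gfun ρ₁ ρ₂ n y = 0 := by rw [hGΦ y (ne_of_gt hy), hΦy, mul_zero]
  exact unique_root (Gcont ρ₁ ρ₂ n) (Gkey ρ₁ ρ₂ n hρ₁ hρ₂ hρ₂C') y z hy hGy hzpos hGz
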